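/- Every ODE-LTI associated with the DAE d(Ex)/dt = Ax + Bu is a minimal state-space realization of the behavior B_ℝ(E,A,B): its state dimension is minimal among all ODE-LTI realizations of the set of solutions of the DAE on ℝ. -/

import Mathlib

open MeasureTheory Set Filter Matrix

open Classical in
noncomputable def pinv {α β : Type} [Fintype α] [Fintype β] [DecidableEq α] [DecidableEq β]
    (M : Matrix α β ℝ) : Matrix β α ℝ :=
  if h : ∃ X : Matrix β α ℝ,
      M * X * M = M ∧ X * M * X = X ∧ (M * X)ᵀ = M * X ∧ (X * M)ᵀ = X * M
  then h.choose else 0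

def IsNiceInterval (I : Set ℝ) : Prop :=
  (∃ a b, I = Set.Icc a b) ∨ (∃ a, I = Set.Ici a) ∨ (∃ a, I = Set.Iic a) ∨ I = Set.univ

def IsDAESolution {c n m : ℕ} (E A : Matrix (Fin c) (Fin n) ℝ)
    (B : Matrix (Fin c) (Fin m) ℝ) (I : Set ℝ)
    (x : ℝ → Fin n → ℝ) (u : ℝ → Fin m → ℝ) : Prop :=
  LocallyIntegrableOn x I ∧ LocallyIntegrableOn u I ∧
  ∀ t₀ ∈ I, ∀ t ∈ I, t₀ ≤ t →
    E.mulVec (x t) = E.mulVec (x t₀) + ∫ s in t₀..t, (A.mulVec (x s) + B.mulVec (u s))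

def IsStateTraj {r : ℕ} {σ : Type} [Fintype σ] (Al : Matrix (Fin r) (Fin r) ℝ)
    (Bl : Matrix (Fin r) σ ℝ)
    (I : Set ℝ) (p : ℝ → Fin r → ℝ) (g : ℝ → σ → ℝ) : Prop :=
  LocallyIntegrableOn p I ∧ LocallyIntegrableOn g I ∧
  ∀ t₀ ∈ I, ∀ t ∈ I, t₀ ≤ t →
    p t = p t₀ + ∫ τ in t₀..t, (Al.mulVec (p τ) + Bl.mulVec (g τ))

def RealizesOn {c n m nh k : ℕ} (E A : Matrix (Fin c) (Fin n) ℝ) (B : Matrix (Fin c) (Fin m) ℝ)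
    (Al : Matrix (Fin nh) (Fin nh) ℝ) (Bl : Matrix (Fin nh) (Fin k) ℝ)
    (Cl : Matrix (Fin n ⊕ Fin m) (Fin nh) ℝ) (Dl : Matrix (Fin n ⊕ Fin m) (Fin k) ℝ)
    (I : Set ℝ) : Prop :=
  (∀ x u, IsDAESolution E A B I x u →
    ∃ p g, IsStateTraj Al Bl I p g ∧
      ∀ᵐ t ∂(volume.restrict I), Sum.elim (x t) (u t) = Cl.mulVec (p t) + Dl.mulVec (g t)) ∧
  (∀ p g, IsStateTraj Al Bl I p g →
    ∃ x u, IsDAESolution E A B I x u ∧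
      ∀ᵐ t ∂(volume.restrict I), Sum.elim (x t) (u t) = Cl.mulVec (p t) + Dl.mulVec (g t))

def firstRows {n m nh : ℕ} (Cl : Matrix (Fin n ⊕ Fin m) (Fin nh) ℝ) :
    Matrix (Fin n) (Fin nh) ℝ :=
  Matrix.of fun i j => Cl (Sum.inl i) j

def IsAssociated {c n m nh k : ℕ} (E A : Matrix (Fin c) (Fin n) ℝ)
    (B : Matrix (Fin c) (Fin m) ℝ)
    (Al : Matrix (Fin nh) (Fin nh) ℝ) (Bl : Matrix (Fin nh) (Fin k) ℝ)
    (Cl : Matrix (Fin n ⊕ Fin m) (Fin nh) ℝ) (Dl : Matrix (Fin n ⊕ Fin m) (Fin k) ℝ) : Prop :=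
  nh ≤ n ∧
  ((Dl = 0 ∧ Bl = 0 ∧ k = 1) ∨ Dl.rank = k) ∧
  E * firstRows Dl = 0 ∧ (E * firstRows Cl).rank = nh ∧
  ∀ I : Set ℝ, IsNiceInterval I → RealizesOn E A B Al Bl Cl Dl I

def ConsistencySet {c n m : ℕ} (E A : Matrix (Fin c) (Fin n) ℝ)
    (B : Matrix (Fin c) (Fin m) ℝ) : Set (Fin c → ℝ) :=
  {z | ∃ I : Set ℝ, IsNiceInterval I ∧ (0 : ℝ) ∈ I ∧
    ∃ x u, IsDAESolution E A B I x u ∧ E.mulVec (x 0) = z}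


section helpers

lemma myLocInt_mulVec {c n : ℕ} (M : Matrix (Fin c) (Fin n) ℝ) {f : ℝ → Fin n → ℝ}
    (hf : LocallyIntegrable f volume) :
    LocallyIntegrable (fun t => M.mulVec (f t)) volume := by
  rw [MeasureTheory.locallyIntegrable_iff] at hf ⊢
  intro K hK
  have h := (Matrix.mulVecLin M).toContinuousLinearMap.integrable_comp (hf K hK)
  simpa [IntegrableOn] using h

lemma myII_mulVec {c n : ℕ} (M : Matrix (Fin c) (Fin n) ℝ) {f : ℝ → Fin n → ℝ}
    (hf : LocallyIntegrable f volume) (a b : ℝ) :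
    IntervalIntegrable (fun t => M.mulVec (f t)) volume a b :=
  ((myLocInt_mulVec M hf).integrableOn_isCompact isCompact_uIcc).intervalIntegrable

lemma myII_F {c n m : ℕ} (A : Matrix (Fin c) (Fin n) ℝ) (B : Matrix (Fin c) (Fin m) ℝ)
    {x : ℝ → Fin n → ℝ} {u : ℝ → Fin m → ℝ}
    (hx : LocallyIntegrable x volume) (hu : LocallyIntegrable u volume) (a b : ℝ) :
    IntervalIntegrable (fun s => A.mulVec (x s) + B.mulVec (u s)) volume a b :=
  (myII_mulVec A hx a b).add (myII_mulVec B hu a b)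

end helpers

section part2
variable {c n m : ℕ} {E A : Matrix (Fin c) (Fin n) ℝ} {B : Matrix (Fin c) (Fin m) ℝ}
  {x : ℝ → Fin n → ℝ} {u : ℝ → Fin m → ℝ}

lemma dae_shift (hs : IsDAESolution E A B Set.univ x u) (t : ℝ) :
    E.mulVec (x t) = E.mulVec (x 0) + ∫ s in (0:ℝ)..t, (A.mulVec (x s) + B.mulVec (u s)) := by
  rcases le_total 0 t with h | h
  · exact hs.2.2 0 trivial t trivial h
  · have h2 := hs.2.2 t trivial 0 trivial h
    rw [intervalIntegral.integral_symm, h2]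
    abel

lemma dae_cont (hs : IsDAESolution E A B Set.univ x u) :
    Continuous (fun t => E.mulVec (x t)) := by
  have hx := MeasureTheory.locallyIntegrableOn_univ.mp hs.1
  have hu := MeasureTheory.locallyIntegrableOn_univ.mp hs.2.1
  have h : (fun t => E.mulVec (x t)) =
      fun t => E.mulVec (x 0) + ∫ s in (0:ℝ)..t, (A.mulVec (x s) + B.mulVec (u s)) :=
    funext (dae_shift hs)
  rw [h]
  exact continuous_const.add (intervalIntegral.continuous_primitive
    (fun a b => myII_F A B hx hu a b) 0)

lemma stateTraj_iff_dae {r k : ℕ} {Al : Matrix (Fin r) (Fin r) ℝ} {Bl : Matrix (Fin r) (Fin k) ℝ}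
    {I : Set ℝ} {p : ℝ → Fin r → ℝ} {g : ℝ → Fin k → ℝ} :
    IsStateTraj Al Bl I p g ↔ IsDAESolution 1 Al Bl I p g := by
  unfold IsStateTraj IsDAESolution
  simp [Matrix.one_mulVec]

lemma traj_cont {r k : ℕ} {Al : Matrix (Fin r) (Fin r) ℝ} {Bl : Matrix (Fin r) (Fin k) ℝ}
    {p : ℝ → Fin r → ℝ} {g : ℝ → Fin k → ℝ} (h : IsStateTraj Al Bl Set.univ p g) :
    Continuous p := by
  have := dae_cont (stateTraj_iff_dae.mp h)
  simpa [Matrix.one_mulVec] using this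

lemma dae_zero : IsDAESolution E A B Set.univ (fun _ => 0) (fun _ => 0) := by
  refine ⟨?_, ?_, ?_⟩
  · exact MeasureTheory.locallyIntegrableOn_univ.mpr (continuous_const.locallyIntegrable)
  · exact MeasureTheory.locallyIntegrableOn_univ.mpr (continuous_const.locallyIntegrable)
  · intro t₀ _ t _ _
    simp [Matrix.mulVec_zero]

lemma dae_add {x2 : ℝ → Fin n → ℝ} {u2 : ℝ → Fin m → ℝ}
    (h1 : IsDAESolution E A B Set.univ x u) (h2 : IsDAESolution E A B Set.univ x2 u2) :
    IsDAESolution E A B Set.univ (fun t => x t + x2 t) (fun t => u t + u2 t) := by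
  have hx1 := MeasureTheory.locallyIntegrableOn_univ.mp h1.1
  have hu1 := MeasureTheory.locallyIntegrableOn_univ.mp h1.2.1
  have hx2 := MeasureTheory.locallyIntegrableOn_univ.mp h2.1
  have hu2 := MeasureTheory.locallyIntegrableOn_univ.mp h2.2.1
  refine ⟨MeasureTheory.locallyIntegrableOn_univ.mpr (hx1.add hx2),
    MeasureTheory.locallyIntegrableOn_univ.mpr (hu1.add hu2), ?_⟩
  intro t₀ _ t _ hle
  have hcongr : (fun s => A.mulVec (x s + x2 s) + B.mulVec (u s + u2 s)) =
      fun s => (A.mulVec (x s) + B.mulVec (u s)) + (A.mulVec (x2 s) + B.mulVec (u2 s)) := by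
    funext s
    simp [Matrix.mulVec_add]
    abel
  rw [hcongr, intervalIntegral.integral_add (myII_F A B hx1 hu1 t₀ t) (myII_F A B hx2 hu2 t₀ t),
    Matrix.mulVec_add, Matrix.mulVec_add, h1.2.2 t₀ trivial t trivial hle,
    h2.2.2 t₀ trivial t trivial hle]
  abel

lemma dae_smul (a : ℝ) (h1 : IsDAESolution E A B Set.univ x u) :
    IsDAESolution E A B Set.univ (fun t => a • x t) (fun t => a • u t) := by
  have hx1 := MeasureTheory.locallyIntegrableOn_univ.mp h1.1
  have hu1 := MeasureTheory.locallyIntegrableOn_univ.mp h1.2.1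
  refine ⟨MeasureTheory.locallyIntegrableOn_univ.mpr (hx1.smul a),
    MeasureTheory.locallyIntegrableOn_univ.mpr (hu1.smul a), ?_⟩
  intro t₀ _ t _ hle
  have hcongr : (fun s => A.mulVec (a • x s) + B.mulVec (a • u s)) =
      fun s => a • (A.mulVec (x s) + B.mulVec (u s)) := by
    funext s
    simp [Matrix.mulVec_smul, smul_add]
  rw [hcongr, intervalIntegral.integral_smul, Matrix.mulVec_smul, Matrix.mulVec_smul,
    h1.2.2 t₀ trivial t trivial hle, smul_add]

end part2

section part3

lemma exists_exp_traj {r k : ℕ} (Al : Matrix (Fin r) (Fin r) ℝ) (Bl : Matrix (Fin r) (Fin k) ℝ)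
    (p0 : Fin r → ℝ) :
    ∃ p : ℝ → Fin r → ℝ, Continuous p ∧ p 0 = p0 ∧
      IsStateTraj Al Bl Set.univ p (fun _ => 0) := by
  set T : (Fin r → ℝ) →L[ℝ] (Fin r → ℝ) := (Matrix.mulVecLin Al).toContinuousLinearMap with hT
  refine ⟨fun t : ℝ => NormedSpace.exp (t • T) p0, ?_, ?_, ?_⟩
  all_goals {
    have hder : ∀ t : ℝ, HasDerivAt (fun t : ℝ => NormedSpace.exp (t • T) p0)
        (Al.mulVec (NormedSpace.exp (t • T) p0)) t := by
      intro t
      have h1 := (hasDerivAt_exp_smul_const' (𝕂 := ℝ) T t).clm_apply (hasDerivAt_const t p0)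
      simpa [ContinuousLinearMap.mul_apply, hT] using h1
    have hcont : Continuous (fun t : ℝ => NormedSpace.exp (t • T) p0) :=
      continuous_iff_continuousAt.2 fun t => (hder t).continuousAt
    first
    | exact hcont
    | (show NormedSpace.exp ((0:ℝ) • T) p0 = p0
       simp [NormedSpace.exp_zero])
    | (refine ⟨MeasureTheory.locallyIntegrableOn_univ.mpr hcont.locallyIntegrable,
        MeasureTheory.locallyIntegrableOn_univ.mpr continuous_const.locallyIntegrable, ?_⟩
       intro t₀ _ t _ _
       have hcongr : (fun τ : ℝ => Al.mulVec (NormedSpace.exp (τ • T) p0) + Bl.mulVec 0) =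
           fun τ : ℝ => Al.mulVec (NormedSpace.exp (τ • T) p0) := by
         funext τ; simp [Matrix.mulVec_zero]
       have hcint : Continuous fun τ : ℝ => Al.mulVec (NormedSpace.exp (τ • T) p0) := by
         have := T.continuous.comp hcont
         simpa [hT, Function.comp_def] using this
       rw [hcongr, intervalIntegral.integral_eq_sub_of_hasDerivAt
         (fun s _ => hder s) (hcint.intervalIntegrable t₀ t)]
       abel) }

lemma cont_eqOn_closure {d : ℕ} {f g : ℝ → Fin d → ℝ} (hf : Continuous f) (hg : Continuous g)
    {U : Set ℝ} (hU : IsOpen U)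
    (h : ∀ᵐ t ∂(MeasureTheory.volume.restrict U), f t = g t) :
    Set.EqOn f g (closure U) := by
  have hEq : Set.EqOn f g U := by
    intro t ht
    by_contra hne
    have hopen : IsOpen {s : ℝ | f s ≠ g s} := by
      have : IsClosed {s : ℝ | f s = g s} := isClosed_eq hf hg
      exact this.isOpen_compl
    have hpos := (hU.inter hopen).measure_pos MeasureTheory.volume ⟨t, ht, hne⟩
    have h0 : MeasureTheory.volume.restrict U {s : ℝ | f s ≠ g s} = 0 := by
      rw [MeasureTheory.ae_iff] at h
      exact h
    rw [MeasureTheory.Measure.restrict_apply hopen.measurableSet] at h0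
    have hle : MeasureTheory.volume (U ∩ {s : ℝ | f s ≠ g s}) ≤ 0 := by
      rw [Set.inter_comm] at h0
      exact le_of_le_of_eq (le_refl _) h0
    exact absurd (lt_of_lt_of_le hpos hle) (lt_irrefl 0)
  exact hEq.closure hf hg

end part3

section part4

lemma indicator_zero_of_nonpos {r : ℕ} {p : ℝ → Fin r → ℝ} (h0 : p 0 = 0) {s : ℝ} (hs : s ≤ 0) :
    (Set.Ici (0:ℝ)).indicator p s = 0 := by
  rcases lt_or_eq_of_le hs with h | h
  · exact Set.indicator_of_notMem (by simpa using not_le.mpr h) p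
  · rw [h, Set.indicator_of_mem (Set.self_mem_Ici) p, h0]

lemma concat_traj {r k : ℕ} {Al : Matrix (Fin r) (Fin r) ℝ} {Bl : Matrix (Fin r) (Fin k) ℝ}
    {p : ℝ → Fin r → ℝ} {g : ℝ → Fin k → ℝ}
    (h : IsStateTraj Al Bl Set.univ p g) (h0 : p 0 = 0) :
    IsStateTraj Al Bl Set.univ ((Set.Ici (0:ℝ)).indicator p) ((Set.Ici (0:ℝ)).indicator g) := by
  obtain ⟨hp', hg', heq⟩ := h
  have hp := MeasureTheory.locallyIntegrableOn_univ.mp hp'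
  have hg := MeasureTheory.locallyIntegrableOn_univ.mp hg'
  set F : ℝ → Fin r → ℝ := fun s => Al.mulVec (p s) + Bl.mulVec (g s) with hF
  have hFloc : MeasureTheory.LocallyIntegrable F := (myLocInt_mulVec Al hp).add (myLocInt_mulVec Bl hg)
  have hFind : MeasureTheory.LocallyIntegrable ((Set.Ici (0:ℝ)).indicator F) :=
    hFloc.indicator measurableSet_Ici
  have hFI : ∀ a b : ℝ, IntervalIntegrable ((Set.Ici (0:ℝ)).indicator F) MeasureTheory.volume a b :=
    fun a b => (hFind.integrableOn_isCompact isCompact_uIcc).intervalIntegrable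
  have hcongr : ∀ a b : ℝ,
      (∫ τ in a..b, (Al.mulVec ((Set.Ici (0:ℝ)).indicator p τ) +
        Bl.mulVec ((Set.Ici (0:ℝ)).indicator g τ))) =
      ∫ τ in a..b, (Set.Ici (0:ℝ)).indicator F τ := by
    intro a b
    apply intervalIntegral.integral_congr
    intro s _
    by_cases hs : s ∈ Set.Ici (0:ℝ)
    · simp [Set.indicator_of_mem hs, hF]
    · simp [Set.indicator_of_notMem hs, Matrix.mulVec_zero]
  have hzero : ∀ a b : ℝ, a ≤ b → b ≤ 0 →
      (∫ τ in a..b, (Set.Ici (0:ℝ)).indicator F τ) = 0 := by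
    intro a b hab hb0
    have hne : ∀ᵐ s : ℝ, s ≠ 0 := by
      rw [MeasureTheory.ae_iff]
      simpa using measure_singleton (0:ℝ)
    rw [show (0 : Fin r → ℝ) = ∫ τ in a..b, (0 : Fin r → ℝ) from (by simp)]
    apply intervalIntegral.integral_congr_ae
    filter_upwards [hne] with s hs hmem
    rw [Set.uIoc_of_le hab] at hmem
    have : s < 0 := lt_of_le_of_ne (le_trans hmem.2 hb0) hs
    exact Set.indicator_of_notMem (by simpa using not_le.mpr this) F
  have hpos : ∀ b : ℝ, 0 ≤ b →
      (∫ τ in (0:ℝ)..b, (Set.Ici (0:ℝ)).indicator F τ) = p b := by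
    intro b hb
    have h1 : (∫ τ in (0:ℝ)..b, (Set.Ici (0:ℝ)).indicator F τ) = ∫ τ in (0:ℝ)..b, F τ := by
      apply intervalIntegral.integral_congr
      intro s hsmem
      rw [Set.uIcc_of_le hb] at hsmem
      exact Set.indicator_of_mem hsmem.1 F
    have h2 := heq 0 trivial b trivial hb
    rw [h1, h2, h0]
    simp
  refine ⟨MeasureTheory.locallyIntegrableOn_univ.mpr (hp.indicator measurableSet_Ici),
    MeasureTheory.locallyIntegrableOn_univ.mpr (hg.indicator measurableSet_Ici), ?_⟩
  intro t₀ _ t _ hle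
  rw [hcongr]
  by_cases ht₀ : 0 ≤ t₀
  · have hsub : Set.uIcc t₀ t ⊆ Set.Ici (0:ℝ) := by
      rw [Set.uIcc_of_le hle]
      exact fun s hs => le_trans ht₀ hs.1
    have h1 : (∫ τ in t₀..t, (Set.Ici (0:ℝ)).indicator F τ) = ∫ τ in t₀..t, F τ :=
      intervalIntegral.integral_congr fun s hs => Set.indicator_of_mem (hsub hs) F
    rw [h1, Set.indicator_of_mem (Set.mem_Ici.mpr (le_trans ht₀ hle)) p,
      Set.indicator_of_mem (Set.mem_Ici.mpr ht₀) p]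
    exact heq t₀ trivial t trivial hle
  · push_neg at ht₀
    by_cases ht : t ≤ 0
    · rw [hzero t₀ t hle ht, indicator_zero_of_nonpos h0 ht,
        indicator_zero_of_nonpos h0 (le_of_lt ht₀)]
      simp
    · push_neg at ht
      rw [← intervalIntegral.integral_add_adjacent_intervals (hFI t₀ 0) (hFI 0 t),
        hzero t₀ 0 (le_of_lt ht₀) le_rfl, hpos t (le_of_lt ht),
        indicator_zero_of_nonpos h0 (le_of_lt ht₀),
        Set.indicator_of_mem (Set.mem_Ici.mpr (le_of_lt ht)) p]
      simp

end part4

lemma output_x {n m r s : ℕ} (Cl : Matrix (Fin n ⊕ Fin m) (Fin r) ℝ)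
    (Dl : Matrix (Fin n ⊕ Fin m) (Fin s) ℝ) {xv : Fin n → ℝ} {uv : Fin m → ℝ}
    {pv : Fin r → ℝ} {gv : Fin s → ℝ}
    (h : Sum.elim xv uv = Cl.mulVec pv + Dl.mulVec gv) :
    xv = (firstRows Cl).mulVec pv + (firstRows Dl).mulVec gv := by
  funext i
  have h1 := congrFun h (Sum.inl i)
  simpa [firstRows, Matrix.mulVec, dotProduct] using h1

/-- Corollary (Minimality), part 1: every associated ODE-LTI is a minimal state-space
realization of the behavior `B_ℝ(E,A,B)`. -/
theorem associated_is_minimal_realization {c n m nh k : ℕ}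
    (E A : Matrix (Fin c) (Fin n) ℝ) (B : Matrix (Fin c) (Fin m) ℝ)
    (Al : Matrix (Fin nh) (Fin nh) ℝ) (Bl : Matrix (Fin nh) (Fin k) ℝ)
    (Cl : Matrix (Fin n ⊕ Fin m) (Fin nh) ℝ) (Dl : Matrix (Fin n ⊕ Fin m) (Fin k) ℝ)
    (hassoc : IsAssociated E A B Al Bl Cl Dl) :
    RealizesOn E A B Al Bl Cl Dl Set.univ ∧
    ∀ (nh' k' : ℕ) (A' : Matrix (Fin nh') (Fin nh') ℝ) (B' : Matrix (Fin nh') (Fin k') ℝ)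
      (C' : Matrix (Fin n ⊕ Fin m) (Fin nh') ℝ) (D' : Matrix (Fin n ⊕ Fin m) (Fin k') ℝ),
      RealizesOn E A B A' B' C' D' Set.univ → nh ≤ nh' := by
  have hrealu : RealizesOn E A B Al Bl Cl Dl Set.univ :=
    hassoc.2.2.2.2 Set.univ (Or.inr (Or.inr (Or.inr rfl)))
  refine ⟨hrealu, ?_⟩
  intro nh' k' A' B' C' D' hreal
  classical
  let Q : (Fin nh' → ℝ) × (Fin c → ℝ) → Prop := fun qv =>
    ∃ x u p g, IsDAESolution E A B Set.univ x u ∧ IsStateTraj A' B' Set.univ p g ∧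
      (∀ᵐ t : ℝ, Sum.elim (x t) (u t) = C'.mulVec (p t) + D'.mulVec (g t)) ∧
      p 0 = qv.1 ∧ E.mulVec (x 0) = qv.2
  let W : Submodule ℝ ((Fin nh' → ℝ) × (Fin c → ℝ)) :=
    { carrier := setOf Q
      add_mem' := by
        rintro a b ⟨x1, u1, p1, g1, hs1, ht1, ho1, hp1, hv1⟩
          ⟨x2, u2, p2, g2, hs2, ht2, ho2, hp2, hv2⟩
        refine ⟨fun t => x1 t + x2 t, fun t => u1 t + u2 t, fun t => p1 t + p2 t,
          fun t => g1 t + g2 t, dae_add hs1 hs2,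
          stateTraj_iff_dae.mpr
            (dae_add (stateTraj_iff_dae.mp ht1) (stateTraj_iff_dae.mp ht2)), ?_, ?_, ?_⟩
        · filter_upwards [ho1, ho2] with t h1 h2
          show Sum.elim (x1 t + x2 t) (u1 t + u2 t) =
            C'.mulVec (p1 t + p2 t) + D'.mulVec (g1 t + g2 t)
          have helim : Sum.elim (x1 t + x2 t) (u1 t + u2 t) =
              Sum.elim (x1 t) (u1 t) + Sum.elim (x2 t) (u2 t) := by
            funext i; cases i <;> simp
          rw [helim, h1, h2, Matrix.mulVec_add, Matrix.mulVec_add]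
          abel
        · show p1 0 + p2 0 = (a + b).1
          simp [hp1, hp2]
        · show E.mulVec (x1 0 + x2 0) = (a + b).2
          simp [Matrix.mulVec_add, hv1, hv2]
      zero_mem' := by
        refine ⟨fun _ => 0, fun _ => 0, fun _ => 0, fun _ => 0, dae_zero,
          stateTraj_iff_dae.mpr dae_zero, ?_, rfl, ?_⟩
        · filter_upwards with t
          show Sum.elim (0 : Fin n → ℝ) (0 : Fin m → ℝ) =
            C'.mulVec 0 + D'.mulVec 0
          funext i; cases i <;> simp [Matrix.mulVec_zero]
        · show E.mulVec 0 = (0 : (Fin nh' → ℝ) × (Fin c → ℝ)).2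
          simp [Matrix.mulVec_zero]
      smul_mem' := by
        rintro a w ⟨x1, u1, p1, g1, hs1, ht1, ho1, hp1, hv1⟩
        refine ⟨fun t => a • x1 t, fun t => a • u1 t, fun t => a • p1 t,
          fun t => a • g1 t, dae_smul a hs1,
          stateTraj_iff_dae.mpr (dae_smul a (stateTraj_iff_dae.mp ht1)), ?_, ?_, ?_⟩
        · filter_upwards [ho1] with t h1
          show Sum.elim (a • x1 t) (a • u1 t) =
            C'.mulVec (a • p1 t) + D'.mulVec (a • g1 t)
          have helim : Sum.elim (a • x1 t) (a • u1 t) = a • Sum.elim (x1 t) (u1 t) := by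
            funext i; cases i <;> simp
          rw [helim, h1, Matrix.mulVec_smul, Matrix.mulVec_smul, smul_add]
        · show a • p1 0 = (a • w).1
          simp [hp1]
        · show E.mulVec (a • x1 0) = (a • w).2
          simp [Matrix.mulVec_smul, hv1] }
  have hW0 : ∀ w : (Fin nh' → ℝ) × (Fin c → ℝ), Q w → w.1 = 0 → w.2 = 0 := by
    rintro ⟨q, v⟩ ⟨x, u, p, g, hs, ht, ho, hp0, hv⟩ hq
    simp only at hp0 hv hq ⊢
    have hp00 : p 0 = 0 := by rw [hp0, hq]
    have hct := concat_traj ht hp00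
    obtain ⟨xt, ut, hst2, ho2⟩ := hreal.2 _ _ hct
    rw [MeasureTheory.Measure.restrict_univ] at ho2
    have hcx : Continuous fun t => E.mulVec (xt t) := dae_cont hst2
    have hcx0 : Continuous fun t => E.mulVec (x t) := dae_cont hs
    have hzero : E.mulVec (xt 0) = 0 := by
      have hae : ∀ᵐ t ∂(volume.restrict (Set.Iio (0:ℝ))),
          E.mulVec (xt t) = (fun _ : ℝ => (0 : Fin c → ℝ)) t := by
        filter_upwards [MeasureTheory.ae_restrict_of_ae ho2,
          MeasureTheory.ae_restrict_mem measurableSet_Iio] with t h1 h2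
        have hxe := output_x C' D' h1
        have hnm : t ∉ Set.Ici (0:ℝ) := by simpa using not_le.mpr h2
        rw [Set.indicator_of_notMem hnm, Set.indicator_of_notMem hnm] at hxe
        rw [hxe]
        simp [Matrix.mulVec_zero]
      have hcl := cont_eqOn_closure hcx continuous_const isOpen_Iio hae
      exact hcl (by rw [closure_Iio]; exact Set.self_mem_Iic)
    have heqv : E.mulVec (xt 0) = E.mulVec (x 0) := by
      have hae : ∀ᵐ t ∂(volume.restrict (Set.Ioi (0:ℝ))),
          (fun t => E.mulVec (xt t)) t = (fun t => E.mulVec (x t)) t := by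
        filter_upwards [MeasureTheory.ae_restrict_of_ae ho2,
          MeasureTheory.ae_restrict_of_ae ho,
          MeasureTheory.ae_restrict_mem measurableSet_Ioi] with t h1 h2 h3
        have hmem : t ∈ Set.Ici (0:ℝ) := Set.mem_Ici.mpr (le_of_lt (Set.mem_Ioi.mp h3))
        have hxe1 := output_x C' D' h1
        have hxe2 := output_x C' D' h2
        rw [Set.indicator_of_mem hmem, Set.indicator_of_mem hmem] at hxe1
        show E.mulVec (xt t) = E.mulVec (x t)
        rw [hxe1, hxe2]
      have hcl := cont_eqOn_closure hcx hcx0 isOpen_Ioi hae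
      exact hcl (by rw [closure_Ioi]; exact Set.self_mem_Ici)
    rw [← hv, ← heqv, hzero]
  have hrange : LinearMap.range (E * firstRows Cl).mulVecLin ≤
      W.map (LinearMap.snd ℝ (Fin nh' → ℝ) (Fin c → ℝ)) := by
    rintro v ⟨p0, rfl⟩
    obtain ⟨p, hpc, hp0, hpt⟩ := exists_exp_traj Al Bl p0
    obtain ⟨x, u, hs, ho⟩ := hrealu.2 p (fun _ => 0) hpt
    rw [MeasureTheory.Measure.restrict_univ] at ho
    obtain ⟨p', g', ht', ho'⟩ := hreal.1 x u hs
    rw [MeasureTheory.Measure.restrict_univ] at ho'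
    have hv : E.mulVec (x 0) = (E * firstRows Cl).mulVec p0 := by
      have hae : (fun t => E.mulVec (x t)) =ᵐ[volume]
          (fun t => (E * firstRows Cl).mulVec (p t)) := by
        filter_upwards [ho] with t h1
        have hxe := output_x Cl Dl h1
        show E.mulVec (x t) = (E * firstRows Cl).mulVec (p t)
        rw [hxe]
        simp [Matrix.mulVec_add, Matrix.mulVec_zero, Matrix.mulVec_mulVec]
      have hcts1 : Continuous fun t => E.mulVec (x t) := dae_cont hs
      have hcts2 : Continuous fun t => (E * firstRows Cl).mulVec (p t) := by
        exact (Matrix.mulVecLin (E * firstRows Cl)).toContinuousLinearMap.continuous.comp hpc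
      have heq := (Continuous.ae_eq_iff_eq volume hcts1 hcts2).mp hae
      have h0 := congrFun heq 0
      rw [hp0] at h0
      exact h0
    exact ⟨(p' 0, E.mulVec (x 0)), ⟨x, u, p', g', hs, ht', ho', rfl, rfl⟩, hv⟩
  have hrank : Module.finrank ℝ (LinearMap.range (E * firstRows Cl).mulVecLin) = nh :=
    hassoc.2.2.2.1
  let φ : W →ₗ[ℝ] (Fin nh' → ℝ) := (LinearMap.fst ℝ _ _).comp W.subtype
  have hφ : Function.Injective φ := by
    intro a b hab
    have hmem : ((a : (Fin nh' → ℝ) × (Fin c → ℝ)) - b) ∈ W := sub_mem a.2 b.2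
    have h1 : ((a : (Fin nh' → ℝ) × (Fin c → ℝ)) - b).1 = 0 := by
      have : (a : (Fin nh' → ℝ) × (Fin c → ℝ)).1 = (b : (Fin nh' → ℝ) × (Fin c → ℝ)).1 := hab
      simp [Prod.fst_sub, this]
    have h2 : ((a : (Fin nh' → ℝ) × (Fin c → ℝ)) - b).2 = 0 := hW0 _ hmem h1
    apply Subtype.ext
    have hz : ((a : (Fin nh' → ℝ) × (Fin c → ℝ)) - b) = 0 := Prod.ext h1 h2
    exact sub_eq_zero.mp hz
  have hle1 : Module.finrank ℝ W ≤ nh' := by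
    have := LinearMap.finrank_le_finrank_of_injective hφ
    simpa [Module.finrank_fin_fun] using this
  calc nh = Module.finrank ℝ (LinearMap.range (E * firstRows Cl).mulVecLin) := hrank.symm
    _ ≤ Module.finrank ℝ (W.map (LinearMap.snd ℝ (Fin nh' → ℝ) (Fin c → ℝ))) :=
        Submodule.finrank_mono hrange
    _ ≤ Module.finrank ℝ W := Submodule.finrank_map_le _ _
    _ ≤ nh' := hle1
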